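/- arXiv:1806.04125 — 2 statements merged into one kernel-verified Lean document; each statement's English description precedes it below -/
import Mathlib

section
/- Let W' be the extended affine Weyl group of type D_{n+1} acting on ℝ^{n+1}, and let σ be the involution of ℝ^{n+1} given by e_{n+1} ↦ -e_{n+1} and fixing e_1, ..., e_n. Then the subgroup of elements of W' commuting with σ, restricted to the fixed subspace E = span(e_1,...,e_n), is isomorphic (via restriction) to the extended affine Weyl group W_e of type B_n acting on E. -/
open Finset

/-- A signed permutation of `ℝᵐ` (Weyl group of type B). -/
def IsSignedPermMap (m : ℕ) (w : (Fin m → ℝ) → (Fin m → ℝ)) : Prop :=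
  ∃ (π : Equiv.Perm (Fin m)) (ε : Fin m → ℝ),
    (∀ i, ε i = 1 ∨ ε i = -1) ∧ ∀ x i, w x i = ε i * x (π i)

/-- A signed permutation of `ℝᵐ` with an even number of sign changes
(Weyl group of type D). -/
def IsEvenSignedPermMap (m : ℕ) (w : (Fin m → ℝ) → (Fin m → ℝ)) : Prop :=
  ∃ (π : Equiv.Perm (Fin m)) (ε : Fin m → ℝ),
    (∀ i, ε i = 1 ∨ ε i = -1) ∧
    Even (univ.filter (fun i => ε i = -1)).card ∧
    ∀ x i, w x i = ε i * x (π i)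

/-- The extended affine Weyl group of type Bₙ acting on `ℝⁿ`:
signed permutations composed with translations by `ℤⁿ`. -/
def ExtAffWeylB (n : ℕ) : Set ((Fin n → ℝ) → (Fin n → ℝ)) :=
  {f | ∃ (w : (Fin n → ℝ) → (Fin n → ℝ)) (lam : Fin n → ℤ),
    IsSignedPermMap n w ∧ ∀ x i, f x i = w x i + (lam i : ℝ)}

/-- The extended affine Weyl group of type D_{n+1} acting on `ℝ^{n+1}` (for the adjoint
group): even signed permutations composed with translations by `ℤ^{n+1}`. -/
def ExtAffWeylD (n : ℕ) : Set ((Fin (n + 1) → ℝ) → (Fin (n + 1) → ℝ)) :=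
  {f | ∃ (w : (Fin (n + 1) → ℝ) → (Fin (n + 1) → ℝ)) (lam : Fin (n + 1) → ℤ),
    IsEvenSignedPermMap (n + 1) w ∧ ∀ x i, f x i = w x i + (lam i : ℝ)}

/-- Restriction of a map on `ℝ^{n+1}` to the σ-fixed subspace `E = ℝⁿ`
(first `n` coordinates), embedding `E` by extending with last coordinate `0`. -/
def resE (n : ℕ) (f : (Fin (n + 1) → ℝ) → (Fin (n + 1) → ℝ)) :
    (Fin n → ℝ) → (Fin n → ℝ) :=
  fun x i => f (Fin.snoc x 0) i.castSucc

lemma snoc_zero_apply {n : ℕ} (x : Fin n → ℝ) (j : Fin (n + 1)) (h : j ≠ Fin.last n) :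
    (Fin.snoc x (0 : ℝ) : Fin (n + 1) → ℝ) j = x (j.castPred h) := by
  obtain ⟨i, rfl⟩ : ∃ i : Fin n, j = i.castSucc :=
    ⟨j.castPred h, (Fin.castSucc_castPred j h).symm⟩
  simp

lemma card_filter_castSucc (n : ℕ) (p : Fin (n + 1) → Prop) [DecidablePred p] :
    (univ.filter p).card
      = (univ.filter (fun i : Fin n => p i.castSucc)).card
        + (if p (Fin.last n) then 1 else 0) := by
  rw [Finset.card_filter, Finset.card_filter, Fin.sum_univ_castSucc]

lemma perm_inv_last {n : ℕ} (π : Equiv.Perm (Fin (n + 1)))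
    (hπ : π (Fin.last n) = Fin.last n) : π⁻¹ (Fin.last n) = Fin.last n := by
  conv_lhs => rw [← hπ]
  exact π.symm_apply_apply _

def extLast (n : ℕ) (π : Equiv.Perm (Fin n)) : Equiv.Perm (Fin (n + 1)) where
  toFun := Fin.lastCases (Fin.last n) (fun i => (π i).castSucc)
  invFun := Fin.lastCases (Fin.last n) (fun i => (π⁻¹ i).castSucc)
  left_inv i := by
    induction i using Fin.lastCases with
    | last => simp
    | cast i => simp
  right_inv i := by
    induction i using Fin.lastCases with
    | last => simp
    | cast i => simp

lemma extLast_last (n : ℕ) (π : Equiv.Perm (Fin n)) :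
    extLast n π (Fin.last n) = Fin.last n := by
  simp [extLast]

lemma extLast_castSucc (n : ℕ) (π : Equiv.Perm (Fin n)) (i : Fin n) :
    extLast n π i.castSucc = (π i).castSucc := by
  simp [extLast]

def restrictPerm (n : ℕ) (π : Equiv.Perm (Fin (n + 1)))
    (hπ : π (Fin.last n) = Fin.last n) : Equiv.Perm (Fin n) where
  toFun i := (π i.castSucc).castPred
    (fun h => (Fin.castSucc_lt_last i).ne (π.injective (h.trans hπ.symm)))
  invFun i := (π⁻¹ i.castSucc).castPred
    (fun h => (Fin.castSucc_lt_last i).ne (π⁻¹.injective (h.trans (perm_inv_last π hπ).symm)))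
  left_inv i := by simp
  right_inv i := by simp

lemma restrictPerm_castSucc (n : ℕ) (π : Equiv.Perm (Fin (n + 1)))
    (hπ : π (Fin.last n) = Fin.last n) (i : Fin n) :
    ((restrictPerm n π hπ) i).castSucc = π i.castSucc :=
  Fin.castSucc_castPred _ (fun h => (Fin.castSucc_lt_last i).ne (π.injective (h.trans hπ.symm)))

lemma keyD (n : ℕ) (σ : (Fin (n + 1) → ℝ) → (Fin (n + 1) → ℝ))
    (hσ : ∀ x i, σ x i = if i = Fin.last n then -x i else x i)
    (f : (Fin (n + 1) → ℝ) → (Fin (n + 1) → ℝ))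
    (hf : f ∈ ExtAffWeylD n) (hc : f ∘ σ = σ ∘ f) :
    ∃ (π : Equiv.Perm (Fin (n+1))) (ε : Fin (n+1) → ℝ) (lam : Fin (n+1) → ℤ),
      (∀ i, ε i = 1 ∨ ε i = -1) ∧
      Even ((univ.filter (fun i => ε i = -1)).card) ∧
      (∀ i : Fin n, π i.castSucc ≠ Fin.last n) ∧
      π (Fin.last n) = Fin.last n ∧ lam (Fin.last n) = 0 ∧
      ∀ x i, f x i = ε i * x (π i) + lam i := by
  obtain ⟨w, lam, ⟨π, ε, hε, hpar, hw⟩, hfw⟩ := hf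
  have hf' : ∀ x i, f x i = ε i * x (π i) + lam i := fun x i => by rw [hfw, hw]
  have hcomm : ∀ x i, f (σ x) i = σ (f x) i := fun x i => congrFun (congrFun hc x) i
  have hεne : ∀ i, ε i ≠ 0 := by
    intro i; rcases hε i with h | h <;> rw [h] <;> norm_num
  have hne : ∀ i : Fin n, π i.castSucc ≠ Fin.last n := by
    intro i hlast
    have h1 := hcomm (fun _ => 1) i.castSucc
    simp only [hf', hσ, hlast, if_pos, (Fin.castSucc_lt_last i).ne, if_neg, if_false] at h1
    exact hεne i.castSucc (by linarith)
  have hπl : π (Fin.last n) = Fin.last n := by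
    by_contra h
    have hk : π⁻¹ (Fin.last n) ≠ Fin.last n := by
      intro hk; apply h
      have := congrArg π hk
      simpa using this.symm
    have hk2 : π (π⁻¹ (Fin.last n)) = Fin.last n := by simp
    exact hne ((π⁻¹ (Fin.last n)).castPred hk)
      (by rw [Fin.castSucc_castPred]; exact hk2)
  have hlaml : lam (Fin.last n) = 0 := by
    have h0 := hcomm 0 (Fin.last n)
    have hσ0 : σ (0 : Fin (n+1) → ℝ) = 0 := by
      funext j; rw [hσ]; simp
    rw [hσ0, hf', hσ, if_pos rfl, hf'] at h0
    simp only [Pi.zero_apply, mul_zero, zero_add] at h0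
    exact_mod_cast (by linarith : (lam (Fin.last n) : ℝ) = 0)
  exact ⟨π, ε, lam, hε, hpar, hne, hπl, hlaml, hf'⟩

lemma mapE (n : ℕ) (σ : (Fin (n + 1) → ℝ) → (Fin (n + 1) → ℝ))
    (hσ : ∀ x i, σ x i = if i = Fin.last n then -x i else x i)
    (h : (Fin (n + 1) → ℝ) → (Fin (n + 1) → ℝ)) (hc : h ∘ σ = σ ∘ h)
    (x : Fin n → ℝ) :
    h (Fin.snoc x 0) = Fin.snoc (resE n h x) 0 := by
  have hfix : σ (Fin.snoc x 0) = Fin.snoc x 0 := by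
    funext j
    rw [hσ]
    split
    · next hj => subst hj; simp
    · rfl
  have h2 : σ (h (Fin.snoc x 0)) = h (Fin.snoc x 0) := by
    have hcf := congrFun hc (Fin.snoc x 0)
    simp only [Function.comp_apply] at hcf
    rw [hfix] at hcf
    exact hcf.symm
  have h3 : h (Fin.snoc x 0) (Fin.last n) = 0 := by
    have := congrFun h2 (Fin.last n)
    rw [hσ] at this
    simp at this
    linarith
  funext j
  induction j using Fin.lastCases with
  | last => simpa using h3
  | cast i => rw [Fin.snoc_castSucc]; rfl

/-- for `σ : ℝ^{n+1} → ℝ^{n+1}` negating the last coordinate, the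
restriction map `w ↦ w|_E` is a group isomorphism from the set of elements of the
extended affine Weyl group of type D_{n+1} commuting with `σ` onto the extended affine
Weyl group of type Bₙ acting on `E`: it lands in `W_e(Bₙ)`, is injective, surjective,
and respects composition. -/
theorem stmt7 (n : ℕ) (hn : 1 ≤ n)
    (σ : (Fin (n + 1) → ℝ) → (Fin (n + 1) → ℝ))
    (hσ : ∀ x i, σ x i = if i = Fin.last n then -x i else x i) :
    (∀ f ∈ ExtAffWeylD n, f ∘ σ = σ ∘ f → resE n f ∈ ExtAffWeylB n) ∧
    Set.InjOn (resE n) {f ∈ ExtAffWeylD n | f ∘ σ = σ ∘ f} ∧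
    (∀ g ∈ ExtAffWeylB n, ∃ f ∈ ExtAffWeylD n, f ∘ σ = σ ∘ f ∧ resE n f = g) ∧
    (∀ f ∈ ExtAffWeylD n, ∀ h ∈ ExtAffWeylD n, f ∘ σ = σ ∘ f → h ∘ σ = σ ∘ h →
      resE n (f ∘ h) = resE n f ∘ resE n h) := by
  refine ⟨?_, ?_, ?_, ?_⟩
  · -- lands in B
    intro f hf hc
    obtain ⟨π, ε, lam, hε, hpar, hne, hπl, hlaml, hf'⟩ := keyD n σ hσ f hf hc
    refine ⟨fun x i => ε i.castSucc * x (restrictPerm n π hπl i), fun i => lam i.castSucc,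
      ⟨restrictPerm n π hπl, fun i => ε i.castSucc, fun i => hε _, fun x i => rfl⟩, ?_⟩
    intro x i
    simp only [resE]
    rw [hf', ← restrictPerm_castSucc n π hπl i, Fin.snoc_castSucc]
  · -- injective
    intro f hfmem f' hfmem' hEq
    obtain ⟨π, ε, lam, hε, hpar, hne, hπl, hlaml, hf1⟩ :=
      keyD n σ hσ f hfmem.1 hfmem.2
    obtain ⟨π', ε', lam', hε', hpar', hne', hπl', hlaml', hf2⟩ :=
      keyD n σ hσ f' hfmem'.1 hfmem'.2
    have hεne : ∀ i, ε i ≠ 0 := by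
      intro i; rcases hε i with h | h <;> rw [h] <;> norm_num
    have hres : ∀ (x : Fin n → ℝ) (i : Fin n),
        ε i.castSucc * x ((π i.castSucc).castPred (hne i)) + (lam i.castSucc : ℝ)
          = ε' i.castSucc * x ((π' i.castSucc).castPred (hne' i)) + (lam' i.castSucc : ℝ) := by
      intro x i
      have h0 := congrFun (congrFun hEq x) i
      simp only [resE] at h0
      rw [hf1, hf2, snoc_zero_apply x _ (hne i), snoc_zero_apply x _ (hne' i)] at h0
      exact h0
    have hlam : ∀ i : Fin n, lam i.castSucc = lam' i.castSucc := by
      intro i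
      have h0 := hres 0 i
      simp only [Pi.zero_apply, mul_zero, zero_add] at h0
      exact_mod_cast h0
    have hab : ∀ i : Fin n, (π i.castSucc).castPred (hne i)
          = (π' i.castSucc).castPred (hne' i) ∧ ε i.castSucc = ε' i.castSucc := by
      intro i
      have h1 := hres (Pi.single ((π i.castSucc).castPred (hne i)) 1) i
      rw [hlam i] at h1
      rw [Pi.single_eq_same, Pi.single_apply] at h1
      by_cases hd : (π' i.castSucc).castPred (hne' i) = (π i.castSucc).castPred (hne i)
      · rw [if_pos hd] at h1
        exact ⟨hd.symm, by linarith⟩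
      · rw [if_neg hd] at h1
        exact absurd (by linarith : ε i.castSucc = 0) (hεne i.castSucc)
    have hπeq : ∀ j, π j = π' j := by
      intro j
      induction j using Fin.lastCases with
      | last => rw [hπl, hπl']
      | cast i =>
        have h0 := congrArg Fin.castSucc (hab i).1
        rwa [Fin.castSucc_castPred, Fin.castSucc_castPred] at h0
    have hεlast : ε (Fin.last n) = ε' (Fin.last n) := by
      rw [card_filter_castSucc n (fun i => ε i = -1)] at hpar
      rw [card_filter_castSucc n (fun i => ε' i = -1)] at hpar'
      have hfe : (univ.filter fun i : Fin n => ε i.castSucc = -1)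
          = (univ.filter fun i : Fin n => ε' i.castSucc = -1) := by
        apply Finset.filter_congr
        intro i _
        rw [(hab i).2]
      rw [hfe] at hpar
      rw [Nat.even_iff] at hpar hpar'
      have ht : (if ε (Fin.last n) = -1 then 1 else 0)
          = (if ε' (Fin.last n) = -1 then 1 else 0) := by
        split_ifs at hpar hpar' ⊢ <;> omega
      rcases hε (Fin.last n) with h1 | h1 <;> rcases hε' (Fin.last n) with h2 | h2 <;>
        rw [h1, h2] <;> rw [h1, h2] at ht <;> norm_num at ht
    have hεeq : ∀ j, ε j = ε' j := by
      intro j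
      induction j using Fin.lastCases with
      | last => exact hεlast
      | cast i => exact (hab i).2
    have hlameq : ∀ j, lam j = lam' j := by
      intro j
      induction j using Fin.lastCases with
      | last => rw [hlaml, hlaml']
      | cast i => exact hlam i
    funext x j
    rw [hf1, hf2, hπeq j, hεeq j, hlameq j]
  · -- surjective
    intro g hg
    obtain ⟨wg, lamg, ⟨πg, εg, hεg, hwg⟩, hgw⟩ := hg
    have hg' : ∀ x i, g x i = εg i * x (πg i) + (lamg i : ℝ) := fun x i => by
      rw [hgw, hwg]
    have main : ∀ εl : ℝ, (εl = 1 ∨ εl = -1) →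
        Even ((univ.filter (fun i : Fin (n+1) =>
          (Fin.snoc εg εl : Fin (n+1) → ℝ) i = -1)).card) →
        ∃ f ∈ ExtAffWeylD n, f ∘ σ = σ ∘ f ∧ resE n f = g := by
      intro εl hεl hpar
      refine ⟨fun x i => (Fin.snoc εg εl : Fin (n+1) → ℝ) i * x (extLast n πg i)
          + ((Fin.snoc lamg 0 : Fin (n+1) → ℤ) i : ℝ),
        ⟨fun x i => (Fin.snoc εg εl : Fin (n+1) → ℝ) i * x (extLast n πg i),
          Fin.snoc lamg 0,
          ⟨extLast n πg, Fin.snoc εg εl, ?_, hpar, fun x i => rfl⟩, fun x i => rfl⟩,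
        ?_, ?_⟩
      · intro i
        induction i using Fin.lastCases with
        | last => rw [Fin.snoc_last]; exact hεl
        | cast i => rw [Fin.snoc_castSucc]; exact hεg i
      · funext x j
        simp only [Function.comp_apply]
        induction j using Fin.lastCases with
        | last =>
          simp only [hσ, extLast_last, Fin.snoc_last, if_pos]
          push_cast
          ring
        | cast i =>
          simp only [hσ, extLast_castSucc, Fin.snoc_castSucc,
            (Fin.castSucc_lt_last i).ne, (Fin.castSucc_lt_last (πg i)).ne,
            if_neg, if_false]
      · funext x i
        simp only [resE]
        rw [extLast_castSucc, Fin.snoc_castSucc, Fin.snoc_castSucc, Fin.snoc_castSucc,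
          hg']
    by_cases hev : Even ((univ.filter (fun i => εg i = -1)).card)
    · refine main 1 (Or.inl rfl) ?_
      rw [card_filter_castSucc]
      have h1 : ∀ i : Fin n, ((Fin.snoc εg (1:ℝ) : Fin (n+1) → ℝ) i.castSucc = -1) ↔ (εg i = -1) := by
        intro i; rw [Fin.snoc_castSucc]
      rw [Finset.filter_congr (fun i _ => h1 i)]
      rw [Fin.snoc_last, if_neg (by norm_num : (1:ℝ) ≠ -1), Nat.add_zero]
      exact hev
    · refine main (-1) (Or.inr rfl) ?_
      rw [card_filter_castSucc]
      have h1 : ∀ i : Fin n, ((Fin.snoc εg (-1:ℝ) : Fin (n+1) → ℝ) i.castSucc = -1) ↔ (εg i = -1) := by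
        intro i; rw [Fin.snoc_castSucc]
      rw [Finset.filter_congr (fun i _ => h1 i)]
      rw [Fin.snoc_last, if_pos rfl, Nat.even_add_one]
      exact hev
  · -- multiplicative
    intro f hf h hh hcf hch
    funext x i
    simp only [resE, Function.comp_apply]
    rw [mapE n σ hσ h hch x]
end

section
/- Let k₀ be a field, k/k₀ a quadratic extension. Embed T_k = k^×/k₀^× into PGL₂(k₀) via the action of k^× on k ≅ k₀² by multiplication (in a fixed basis). Let B̄ be the image in PGL₂(k₀) of the lower triangular matrices. Then PGL₂(k₀) = T_k · B̄, and T_k ∩ B̄ is trivial. -/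
open Matrix

/-- A central element of `GL n R` has scalar matrix. -/
lemma center_is_scalar {n : Type*} [DecidableEq n] [Fintype n] {R : Type*} [CommRing R]
    {z : GL n R} (hz : z ∈ Subgroup.center (GL n R)) :
    ∃ r : R, (z : Matrix n n R) = Matrix.scalar n r := by
  have h := Matrix.mem_range_scalar_of_commute_transvectionStruct
    (M := (z : Matrix n n R)) (fun t => ?_)
  · obtain ⟨r, hr⟩ := h
    exact ⟨r, hr.symm⟩
  · have := Subgroup.mem_center_iff.mp hz
      ⟨t.toMatrix, t.inv.toMatrix, t.mul_inv, t.inv_mul⟩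
    simpa [Commute, SemiconjBy, Units.ext_iff] using this

/-- for a quadratic extension `k/k₀`, embedding `T_k = k^×/k₀^×` into
`PGL₂(k₀)` via the regular representation `ρ` of `k^×` on `k ≅ k₀²`, and with `B̄` the
image of the lower triangular matrices, one has `PGL₂(k₀) = T_k · B̄` and
`T_k ∩ B̄ = 1`.  Here `PGL₂(k₀)` is realized as `GL₂(k₀)` modulo its center, with
projection `π`. -/
theorem stmt15 (k₀ k : Type*) [Field k₀] [Field k] [Algebra k₀ k]
    (B : Module.Basis (Fin 2) k₀ k)
    (ρ : kˣ →* GL (Fin 2) k₀)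
    (hρ : ∀ x : kˣ, ((ρ x : GL (Fin 2) k₀) : Matrix (Fin 2) (Fin 2) k₀) =
      Algebra.leftMulMatrix B (x : k)) :
    let π := QuotientGroup.mk' (Subgroup.center (GL (Fin 2) k₀))
    (∀ g : GL (Fin 2) k₀, ∃ (x : kˣ) (b : GL (Fin 2) k₀),
      (b : Matrix (Fin 2) (Fin 2) k₀) 0 1 = 0 ∧ π g = π (ρ x) * π b) ∧
    ∀ (x : kˣ) (b : GL (Fin 2) k₀), (b : Matrix (Fin 2) (Fin 2) k₀) 0 1 = 0 →
      π (ρ x) = π b → π (ρ x) = 1 := by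
  intro π
  constructor
  · -- transitivity part
    intro g
    set G : Matrix (Fin 2) (Fin 2) k₀ := (g : Matrix (Fin 2) (Fin 2) k₀) with hG
    -- the element of k corresponding to column 1 of g
    set w : k := G 0 1 • B 0 + G 1 1 • B 1 with hw
    have hrepr : ∀ i, B.repr w i = G i 1 := by
      intro i
      simp [hw, Module.Basis.repr_self, Finsupp.single_apply]
      fin_cases i <;> simp
    have hwne : w ≠ 0 := by
      intro h0
      -- then column 1 of g is zero, contradicting invertibility
      have hcol : ∀ i, G i 1 = 0 := by
        intro i; rw [← hrepr i, h0, map_zero]; rfl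
      have h1 : ((g⁻¹ : GL (Fin 2) k₀) : Matrix (Fin 2) (Fin 2) k₀) * G = 1 := g.inv_mul
      have h2 := congrFun (congrFun h1 1) 1
      simp [Matrix.mul_apply, Fin.sum_univ_two, hcol] at h2
    have hB1 : (B 1 : k) ≠ 0 := B.ne_zero 1
    set x : kˣ := Units.mk0 (w / B 1) (div_ne_zero hwne hB1) with hx
    have hxB1 : (x : k) * B 1 = w := by
      simp [hx, div_mul_cancel₀ _ hB1]
    set b : GL (Fin 2) k₀ := (ρ x)⁻¹ * g with hb
    refine ⟨x, b, ?_, ?_⟩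
    · -- (b)₀₁ = 0
      set M : Matrix (Fin 2) (Fin 2) k₀ := ((ρ x : GL (Fin 2) k₀) : Matrix (Fin 2) (Fin 2) k₀)
        with hM
      have hMcol : ∀ i, M i 1 = G i 1 := by
        intro i
        rw [hM, hρ x, Algebra.leftMulMatrix_eq_repr_mul, hxB1, hrepr]
      have hmul : M * (b : Matrix (Fin 2) (Fin 2) k₀) = G := by
        have : (ρ x) * b = g := by rw [hb, mul_inv_cancel_left]
        simp only [hM, hG, ← Units.val_mul, this]
      -- columns: M.mulVec (col of b) = col of G = M.mulVec (single 1 1)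
      have hv1 : M.mulVec (fun j => (b : Matrix (Fin 2) (Fin 2) k₀) j 1) =
          M.mulVec (Pi.single 1 1) := by
        funext i
        have h1 : M.mulVec (fun j => (b : Matrix (Fin 2) (Fin 2) k₀) j 1) i = G i 1 := by
          rw [← hmul]; simp [Matrix.mulVec, Matrix.mul_apply, dotProduct]
        have h2 : M.mulVec (Pi.single 1 1) i = G i 1 := by
          rw [Matrix.mulVec_single, ← hMcol]; simp
        rw [h1, h2]
      have hinj : Function.Injective M.mulVec := by
        intro u v huv
        have := congrArg (((ρ x)⁻¹ : GL (Fin 2) k₀) : Matrix (Fin 2) (Fin 2) k₀).mulVec huv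
        rwa [Matrix.mulVec_mulVec, Matrix.mulVec_mulVec,
          show (((ρ x)⁻¹ : GL (Fin 2) k₀) : Matrix (Fin 2) (Fin 2) k₀) * M = 1 from
            (ρ x).inv_mul,
          Matrix.one_mulVec, Matrix.one_mulVec] at this
      have := congrFun (hinj hv1) 0
      simpa using this
    · rw [hb, _root_.map_mul, _root_.map_inv, mul_inv_cancel_left]
  · -- triviality part
    intro x b hb hpi
    have hB1 : (B 1 : k) ≠ 0 := B.ne_zero 1
    have hz : (ρ x) * b⁻¹ ∈ Subgroup.center (GL (Fin 2) k₀) := by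
      have : π ((ρ x) * b⁻¹) = 1 := by
        rw [_root_.map_mul, _root_.map_inv, hpi, mul_inv_cancel]
      exact (QuotientGroup.eq_one_iff _).mp this
    obtain ⟨r, hr⟩ := center_is_scalar hz
    -- ρ x = (scalar r) * b as matrices
    have hmat : ((ρ x : GL (Fin 2) k₀) : Matrix (Fin 2) (Fin 2) k₀) =
        Matrix.scalar (Fin 2) r * (b : Matrix (Fin 2) (Fin 2) k₀) := by
      have : (ρ x) * b⁻¹ * b = ρ x := by rw [inv_mul_cancel_right]
      calc ((ρ x : GL (Fin 2) k₀) : Matrix (Fin 2) (Fin 2) k₀)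
          = ((((ρ x) * b⁻¹ * b : GL (Fin 2) k₀)) : Matrix (Fin 2) (Fin 2) k₀) := by rw [this]
        _ = Matrix.scalar (Fin 2) r * (b : Matrix (Fin 2) (Fin 2) k₀) := by
            rw [Units.val_mul, hr]
    have h01 : (Algebra.leftMulMatrix B (x : k)) 0 1 = 0 := by
      rw [← hρ x, hmat]
      simp [Matrix.scalar_apply, Matrix.diagonal_mul, hb]
    -- hence x * B 1 ∈ k₀ • B 1
    have hrepr0 : B.repr ((x : k) * B 1) 0 = 0 := by
      rw [← Algebra.leftMulMatrix_eq_repr_mul]; exact h01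
    set s : k₀ := B.repr ((x : k) * B 1) 1 with hs
    have hxB : (x : k) * B 1 = s • B 1 := by
      have := B.sum_repr ((x : k) * B 1)
      rw [Fin.sum_univ_two, hrepr0, zero_smul, zero_add] at this
      exact this.symm
    have hxs : (x : k) = algebraMap k₀ k s := by
      have : (x : k) * B 1 = algebraMap k₀ k s * B 1 := by
        rw [hxB, Algebra.smul_def]
      exact mul_right_cancel₀ hB1 this
    -- so ρ x is a scalar matrix, hence central
    have hscal : ((ρ x : GL (Fin 2) k₀) : Matrix (Fin 2) (Fin 2) k₀) =
        Matrix.scalar (Fin 2) s := by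
      rw [hρ x]
      funext i j
      rw [Algebra.leftMulMatrix_eq_repr_mul, hxs, ← Algebra.smul_def, _root_.map_smul]
      simp [Module.Basis.repr_self, Finsupp.single_apply, Matrix.scalar_apply,
        Matrix.diagonal_apply, eq_comm]
    have hc : ρ x ∈ Subgroup.center (GL (Fin 2) k₀) := by
      rw [Subgroup.mem_center_iff]
      intro h
      refine Units.ext ?_
      rw [Units.val_mul, Units.val_mul, hscal]
      exact (Matrix.scalar_commute s (fun r' => mul_comm s r') _).symm
    exact (QuotientGroup.eq_one_iff _).mpr hc
end
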